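/- For every positive integer r, the sequence n ↦ z_n({2}^r; e^{2πi/n}) converges as n → ∞ to 2^{2r} π^{2r} / ((r+1) · (2r+1)!). That is, ξ({2}^r) = 2^{2r} π^{2r} / ((r+1)(2r+1)!). -/

import Mathlib

open Finset

/-- The set of tuples `(m_1,...,m_r)` with `n > m_1 > m_2 > ... > m_r > 0`. -/
def msets (n r : ℕ) : Finset (Fin r → Fin n) :=
  Finset.univ.filter fun m =>
    (∀ i j : Fin r, i < j → m j < m i) ∧ ∀ i, 0 < (m i : ℕ)

/-- The set of tuples `(m_1,...,m_r)` with `n > m_1 ≥ m_2 ≥ ... ≥ m_r > 0`. -/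
def msetsStar (n r : ℕ) : Finset (Fin r → Fin n) :=
  Finset.univ.filter fun m =>
    (∀ i j : Fin r, i ≤ j → m j ≤ m i) ∧ ∀ i, 0 < (m i : ℕ)

/-- The finite multiple harmonic q-series
`z_n(k_1,…,k_r; q) = Σ_{n > m_1 > … > m_r > 0} Π_i q^{(k_i-1)m_i}/[m_i]_q^{k_i}`,
where `[m]_q = (1-q^m)/(1-q)`. -/
noncomputable def z (n : ℕ) {r : ℕ} (k : Fin r → ℕ) (q : ℂ) : ℂ :=
  ∑ m ∈ msets n r,
    ∏ i, q ^ ((k i - 1) * (m i : ℕ)) / ((1 - q ^ (m i : ℕ)) / (1 - q)) ^ (k i)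

/-- The star version `z*_n(k; q)`, summed over `n > m_1 ≥ … ≥ m_r > 0`. -/
noncomputable def zstar (n : ℕ) {r : ℕ} (k : Fin r → ℕ) (q : ℂ) : ℂ :=
  ∑ m ∈ msetsStar n r,
    ∏ i, q ^ ((k i - 1) * (m i : ℕ)) / ((1 - q ^ (m i : ℕ)) / (1 - q)) ^ (k i)

/-- The modified value `z̄_n(k;q) = (1-q)^{-wt(k)} z_n(k;q)`. -/
noncomputable def zbar (n : ℕ) {r : ℕ} (k : Fin r → ℕ) (q : ℂ) : ℂ :=
  (1 - q)⁻¹ ^ (∑ i, k i) * z n k q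

/-- The modified star value `z̄*_n(k;q) = (1-q)^{-wt(k)} z*_n(k;q)`. -/
noncomputable def zstarbar (n : ℕ) {r : ℕ} (k : Fin r → ℕ) (q : ℂ) : ℂ :=
  (1 - q)⁻¹ ^ (∑ i, k i) * zstar n k q

/-- `I(k,r,s)`: the set of indices (tuples of positive integers) of weight `k`,
depth `r` and height `s`. -/
def indexSet3 (k r s : ℕ) : Finset (Fin r → ℕ) :=
  (Finset.Nat.antidiagonalTuple r k).filter fun a =>
    (∀ i, 1 ≤ a i) ∧ (Finset.univ.filter fun i => 2 ≤ a i).card = s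

/-- `I(k,r)`: the set of indices of weight `k` and depth `r`. -/
def indexSet2 (k r : ℕ) : Finset (Fin r → ℕ) :=
  (Finset.Nat.antidiagonalTuple r k).filter fun a => ∀ i, 1 ≤ a i

/-- The one-variable finite q-multiple polylogarithm
`L_{k_1,…,k_r}^{(n)}(t;q) = Σ_{n > m_1 > … > m_r > 0} t^{m_1} / Π_i (1-q^{m_i})^{k_i}`,
with `L_∅(t) = 1`. -/
noncomputable def Lpoly (n : ℕ) {r : ℕ} (k : Fin r → ℕ) (q t : ℂ) : ℂ :=
  ∑ m ∈ msets n r,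
    ∏ i : Fin r, (if i.val = 0 then t ^ (m i : ℕ) else 1) / (1 - q ^ (m i : ℕ)) ^ (k i)

/-- The star version `L*_{k_1,…,k_r}^{(n)}(t;q)`, summed over `n > m_1 ≥ … ≥ m_r > 0`. -/
noncomputable def LpolyStar (n : ℕ) {r : ℕ} (k : Fin r → ℕ) (q t : ℂ) : ℂ :=
  ∑ m ∈ msetsStar n r,
    ∏ i : Fin r, (if i.val = 0 then t ^ (m i : ℕ) else 1) / (1 - q ^ (m i : ℕ)) ^ (k i)


namespace XiTwosAux
open Polynomial Complex Filter

/-- Chebyshev-like sequence: `cheb n (cos θ) = cos (n θ)`. -/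
noncomputable def cheb : ℕ → ℂ → ℂ
  | 0, _ => 1
  | 1, x => x
  | (n+2), x => 2 * x * cheb (n+1) x - cheb n x

lemma cheb_eval (α : ℂ) (hα : α ≠ 0) : ∀ n : ℕ, 2 * cheb n ((α + α⁻¹)/2) = α^n + (α⁻¹)^n
  | 0 => by norm_num [cheb]
  | 1 => by simp only [cheb]; ring
  | (n+2) => by
      have h1 := cheb_eval α hα (n+1)
      have h0 := cheb_eval α hα n
      have hinv : α * α⁻¹ = 1 := mul_inv_cancel₀ hα
      simp only [cheb]
      linear_combination (α + α⁻¹) * h1 - h0 + (α^n + (α⁻¹)^n) * hinv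

/-- Coefficients `b(n,j)`. -/
noncomputable def bc (n : ℕ) : ℕ → ℂ
  | 0 => 2
  | (l+1) => 2 * ((n + l + 1).choose (2 * l + 2) : ℂ) - ((n + l).choose (2 * l + 1) : ℂ)

lemma bc_zero (m l : ℕ) (h : m < l + 1) : bc m (l+1) = 0 := by
  have h1 : m + l + 1 < 2 * l + 2 := by omega
  have h2 : m + l < 2 * l + 1 := by omega
  simp [bc, Nat.choose_eq_zero_of_lt h1, Nat.choose_eq_zero_of_lt h2]

lemma pascal_key (a k : ℕ) :
    2 * (a+4).choose (k+4) + 2 * (a+2).choose (k+4) + 2 * (a+2).choose (k+3) + (a+1).choose (k+1)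
      = (a+3).choose (k+3) + (a+1).choose (k+3) + 4 * (a+3).choose (k+4)
        + 2 * (a+2).choose (k+2) := by
  have h1 : (a+4).choose (k+4) = (a+3).choose (k+3) + (a+3).choose (k+4) :=
    Nat.choose_succ_succ (a+3) (k+3)
  have h2 : (a+3).choose (k+4) = (a+2).choose (k+3) + (a+2).choose (k+4) :=
    Nat.choose_succ_succ (a+2) (k+3)
  have h3 : (a+3).choose (k+3) = (a+2).choose (k+2) + (a+2).choose (k+3) :=
    Nat.choose_succ_succ (a+2) (k+2)
  have h4 : (a+2).choose (k+3) = (a+1).choose (k+2) + (a+1).choose (k+3) :=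
    Nat.choose_succ_succ (a+1) (k+2)
  have h5 : (a+2).choose (k+2) = (a+1).choose (k+1) + (a+1).choose (k+2) :=
    Nat.choose_succ_succ (a+1) (k+1)
  omega

lemma pascal_one (n : ℕ) :
    2 * (n+3).choose 2 + 2 * (n+1).choose 2 + 2 * (n+1).choose 1
      = (n+2).choose 1 + n.choose 1 + 4 * (n+2).choose 2 + 2 := by
  have h1 : (n+3).choose 2 = (n+2).choose 1 + (n+2).choose 2 :=
    Nat.choose_succ_succ (n+2) 1
  have h2 : (n+2).choose 2 = (n+1).choose 1 + (n+1).choose 2 :=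
    Nat.choose_succ_succ (n+1) 1
  have e1 : (n+2).choose 1 = n+2 := Nat.choose_one_right _
  have e2 : (n+1).choose 1 = n+1 := Nat.choose_one_right _
  have e3 : n.choose 1 = n := Nat.choose_one_right _
  omega

lemma bc_rec (n l : ℕ) :
    bc (n+2) (l+1) + bc n (l+1) = 2 * bc (n+1) (l+1) + bc (n+1) l := by
  match l with
  | 0 =>
      simp only [bc]
      have key := pascal_one n
      have e1 : n + 2 + 0 + 1 = n + 3 := by omega
      have e2 : n + 2 + 0 = n + 2 := by omega
      have e3 : n + 0 + 1 = n + 1 := by omega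
      have e4 : n + 0 = n := by omega
      have e5 : n + 1 + 0 + 1 = n + 2 := by omega
      have e6 : n + 1 + 0 = n + 1 := by omega
      have e7 : 2 * 0 + 2 = 2 := by omega
      have e8 : 2 * 0 + 1 = 1 := by omega
      rw [e1, e2, e3, e4, e5, e6, e7, e8]
      have keyC : 2 * ((n+3).choose 2 : ℂ) + 2 * ((n+1).choose 2 : ℂ)
          + 2 * ((n+1).choose 1 : ℂ)
          = ((n+2).choose 1 : ℂ) + (n.choose 1 : ℂ) + 4 * ((n+2).choose 2 : ℂ) + 2 := by
        exact_mod_cast congrArg (Nat.cast : ℕ → ℂ) key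
      linear_combination keyC
  | (l+1) =>
      simp only [bc]
      have e1 : n + 2 + (l + 1) + 1 = n + l + 4 := by omega
      have e2 : n + 2 + (l + 1) = n + l + 3 := by omega
      have e3 : n + (l + 1) + 1 = n + l + 2 := by omega
      have e4 : n + (l + 1) = n + l + 1 := by omega
      have e5 : n + 1 + (l + 1) + 1 = n + l + 3 := by omega
      have e6 : n + 1 + (l + 1) = n + l + 2 := by omega
      have e7 : n + 1 + l + 1 = n + l + 2 := by omega
      have e8 : n + 1 + l = n + l + 1 := by omega
      have e9 : 2 * (l + 1) + 2 = 2 * l + 4 := by omega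
      have e10 : 2 * (l + 1) + 1 = 2 * l + 3 := by omega
      rw [e1, e2, e3, e4, e5, e6, e7, e8, e9, e10]
      have key := pascal_key (n + l) (2 * l)
      have keyC : 2 * ((n+l+4).choose (2*l+4) : ℂ) + 2 * ((n+l+2).choose (2*l+4) : ℂ)
          + 2 * ((n+l+2).choose (2*l+3) : ℂ) + ((n+l+1).choose (2*l+1) : ℂ)
          = ((n+l+3).choose (2*l+3) : ℂ) + ((n+l+1).choose (2*l+3) : ℂ)
            + 4 * ((n+l+3).choose (2*l+4) : ℂ) + 2 * ((n+l+2).choose (2*l+2) : ℂ) := by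
        exact_mod_cast congrArg (Nat.cast : ℕ → ℂ) key
      linear_combination keyC


lemma cheb_coeff : ∀ (n : ℕ) (t : ℂ),
    2 * cheb n (1 - t/2) = ∑ j ∈ range (n+1), (-1)^j * bc n j * t^j
  | 0, t => by norm_num [cheb, bc]
  | 1, t => by
      rw [Finset.sum_range_succ, Finset.sum_range_succ, Finset.sum_range_zero]
      simp only [cheb, bc]
      norm_num [Nat.choose]
      ring
  | (n+2), t => by
      have H1 := cheb_coeff (n+1) t
      have H0 := cheb_coeff n t
      set A := ∑ j ∈ range (n+2), (-1)^j * bc (n+1) j * t^j with hA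
      set B := ∑ j ∈ range (n+1), (-1)^j * bc n j * t^j with hB
      have expand : 2 * cheb (n+2) (1 - t/2)
          = (2 - t) * (2 * cheb (n+1) (1 - t/2)) - 2 * cheb n (1 - t/2) := by
        simp only [cheb]; ring
      rw [expand, H1, H0]
      have eA : ∑ j ∈ range (n+3), (-1:ℂ)^j * bc (n+1) j * t^j = A := by
        rw [Finset.sum_range_succ, bc_zero (n+1) (n+1) (by omega)]
        simp [hA]
      have eB : ∑ j ∈ range (n+3), (-1:ℂ)^j * bc n j * t^j = B := by
        rw [Finset.sum_range_succ, Finset.sum_range_succ,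
          bc_zero n (n+1) (by omega), bc_zero n n (by omega)]
        simp [hB]
      have etA : t * A = ∑ j ∈ range (n+3),
          (if j = 0 then 0 else (-1:ℂ)^(j-1) * bc (n+1) (j-1) * t^j) := by
        rw [Finset.sum_range_succ']
        have h00 : (if (0:ℕ) = 0 then (0:ℂ) else (-1:ℂ)^(0-1) * bc (n+1) (0-1) * t^0) = 0 :=
          if_pos rfl
        rw [h00, add_zero, hA, Finset.mul_sum]
        refine Finset.sum_congr rfl fun j _ => ?_
        rw [if_neg (Nat.succ_ne_zero j), Nat.add_sub_cancel]
        ring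
      have final : ∑ j ∈ range (n+3), (-1:ℂ)^j * bc (n+2) j * t^j
          = ∑ j ∈ range (n+3), ((2:ℂ) * ((-1)^j * bc (n+1) j * t^j)
            - (if j = 0 then 0 else (-1:ℂ)^(j-1) * bc (n+1) (j-1) * t^j)
            - (-1)^j * bc n j * t^j) := by
        refine Finset.sum_congr rfl fun j _ => ?_
        match j with
        | 0 => norm_num [bc]
        | (l+1) =>
            simp only [if_neg (Nat.succ_ne_zero _), Nat.add_sub_cancel]
            linear_combination ((-1:ℂ)^(l+1) * t^(l+1)) * bc_rec n l
      rw [final]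
      rw [Finset.sum_sub_distrib, Finset.sum_sub_distrib, ← Finset.mul_sum, eA, eB, ← etA]
      ring


lemma bc_def (n l : ℕ) : bc n (l+1)
    = 2 * ((n + l + 1).choose (2 * l + 2) : ℂ) - ((n + l).choose (2 * l + 1) : ℂ) := rfl

variable {n : ℕ} {ζ : ℂ}

lemma prod_lin (hn : 0 < n) (hζ : IsPrimitiveRoot ζ n) (x : ℂ) :
    ∏ i ∈ range n, (x - ζ^i) = x^n - 1 := by
  have h := X_pow_sub_C_eq_prod hζ hn (one_pow n)
  have := congrArg (Polynomial.eval x) h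
  simpa [Polynomial.eval_prod] using this.symm

lemma prod_one_sub (hn : 0 < n) (hζ : IsPrimitiveRoot ζ n) (y : ℂ) :
    ∏ i ∈ range n, (1 - ζ^i * y) = 1 - y^n := by
  rcases eq_or_ne y 0 with rfl | hy
  · simp [hn.ne']
  · have h := prod_lin hn hζ y⁻¹
    calc ∏ i ∈ range n, (1 - ζ^i * y) = ∏ i ∈ range n, (y * (y⁻¹ - ζ^i)) := by
          refine Finset.prod_congr rfl fun i _ => ?_
          field_simp
        _ = y^n * ∏ i ∈ range n, (y⁻¹ - ζ^i) := by
          rw [Finset.prod_mul_distrib, Finset.prod_const, Finset.card_range]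
        _ = y^n * ((y⁻¹)^n - 1) := by rw [h]
        _ = 1 - y^n := by
          rw [inv_pow, mul_sub, mul_inv_cancel₀ (pow_ne_zero n hy), mul_one]

lemma geom_poly (hn : 0 < n) (hζ : IsPrimitiveRoot ζ n) :
    (∏ m ∈ Ico 1 n, (1 - C (ζ^m) * X) : ℂ[X]) = ∑ j ∈ range n, (X : ℂ[X])^j := by
  apply Polynomial.eq_of_infinite_eval_eq
  apply Set.Infinite.mono (s := {x : ℂ | x ≠ 1})
  swap
  · have : ({x : ℂ | x ≠ 1}) = ({1}ᶜ : Set ℂ) := rfl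
    rw [this]
    exact (Set.finite_singleton 1).infinite_compl
  intro y hy
  have hy1 : (1:ℂ) - y ≠ 0 := sub_ne_zero.mpr (Ne.symm hy)
  simp only [Set.mem_setOf_eq, eval_prod, eval_sub, eval_mul, eval_C, eval_X, eval_one,
    eval_finset_sum, eval_pow]
  apply mul_left_cancel₀ hy1
  have hsplit : ∏ i ∈ range n, (1 - ζ^i * y) = (1 - y) * ∏ m ∈ Ico 1 n, (1 - ζ^m * y) := by
    rw [Finset.range_eq_Ico, Finset.prod_eq_prod_Ico_succ_bot hn]
    simp
  have hgeom := geom_sum_mul y n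
  rw [← hsplit, prod_one_sub hn hζ]
  linear_combination hgeom

lemma G_eval (hn : 0 < n) (hζ : IsPrimitiveRoot ζ n) (y : ℂ) :
    ∏ m ∈ Ico 1 n, (1 - ζ^m * y) = ∑ j ∈ range n, y^j := by
  have := congrArg (Polynomial.eval y) (geom_poly hn hζ)
  simpa [eval_prod] using this

lemma prod_units (hn : 0 < n) (hζ : IsPrimitiveRoot ζ n) :
    ∏ m ∈ Ico 1 n, (1 - ζ^m) = (n : ℂ) := by
  have := G_eval hn hζ 1
  simpa using this

lemma step5 (hn : 0 < n) (hζ : IsPrimitiveRoot ζ n) (t : ℂ) :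
    t * ∏ m ∈ Ico 1 n, ((1 - ζ^m)^2 + ζ^m * t) = 2 - 2 * cheb n (1 - t/2) := by
  obtain ⟨w, hw⟩ := IsAlgClosed.exists_pow_nat_eq ((2 - t)^2 - 4) (n := 2) (by norm_num)
  set α : ℂ := (2 - t + w)/2 with hα
  set β : ℂ := (2 - t - w)/2 with hβ
  have hprod : α * β = 1 := by
    rw [hα, hβ]
    linear_combination (-1/4 : ℂ) * hw
  have hsum : α + β = 2 - t := by rw [hα, hβ]; ring
  have hα0 : α ≠ 0 := by
    intro h
    rw [h, zero_mul] at hprod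
    exact zero_ne_one hprod
  have hβinv : β = α⁻¹ := eq_inv_of_mul_eq_one_left (by rw [mul_comm] at hprod; exact hprod)
  have hfac : ∀ m : ℕ, (1 - ζ^m)^2 + ζ^m * t = (1 - ζ^m * α) * (1 - ζ^m * β) := by
    intro m
    linear_combination ((ζ^m)^2/4) * hw
  have hsplit : ∏ m ∈ Ico 1 n, ((1 - ζ^m)^2 + ζ^m * t)
      = (∑ j ∈ range n, α^j) * (∑ j ∈ range n, β^j) := by
    rw [← G_eval hn hζ α, ← G_eval hn hζ β, ← Finset.prod_mul_distrib]
    exact Finset.prod_congr rfl fun m _ => hfac m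
  have ht2 : t = (1 - α) * (1 - β) := by linear_combination hw/4
  have hgα := geom_sum_mul α n
  have hgβ := geom_sum_mul β n
  have habn : α^n * β^n = 1 := by rw [← mul_pow, hprod, one_pow]
  have hchev := cheb_eval α hα0 n
  have hx : (α + α⁻¹)/2 = 1 - t/2 := by
    rw [← hβinv]
    linear_combination hsum / 2
  rw [hx] at hchev
  rw [hsplit]
  calc t * ((∑ j ∈ range n, α^j) * (∑ j ∈ range n, β^j))
      = ((1-α) * ∑ j ∈ range n, α^j) * ((1-β) * ∑ j ∈ range n, β^j) := by
        rw [ht2]; ring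
    _ = (1 - α^n) * (1 - β^n) := by
        have e1 : (1-α) * ∑ j ∈ range n, α^j = 1 - α^n := by linear_combination -hgα
        have e2 : (1-β) * ∑ j ∈ range n, β^j = 1 - β^n := by linear_combination -hgβ
        rw [e1, e2]
    _ = 2 - (α^n + β^n) := by linear_combination habn
    _ = 2 - 2 * cheb n (1 - t/2) := by
        rw [hβinv, ← hchev]


noncomputable def Ecoef (n : ℕ) (ζ : ℂ) (j : ℕ) : ℂ :=
  ∑ S ∈ powersetCard j (Ico 1 n), (∏ m ∈ S, ζ^m) * ∏ m ∈ (Ico 1 n) \ S, (1 - ζ^m)^2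

lemma expand (hn : 0 < n) (t : ℂ) :
    ∏ m ∈ Ico 1 n, ((1 - ζ^m)^2 + ζ^m * t) = ∑ j ∈ range n, Ecoef n ζ j * t^j := by
  have h1 : ∏ m ∈ Ico 1 n, ((1 - ζ^m)^2 + ζ^m * t)
      = ∏ m ∈ Ico 1 n, (ζ^m * t + (1 - ζ^m)^2) :=
    Finset.prod_congr rfl fun m _ => by ring
  rw [h1, Finset.prod_add, Finset.sum_powerset]
  have hcard : (Ico 1 n).card = n - 1 := by rw [Nat.card_Ico]
  rw [hcard, Nat.sub_add_cancel hn]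
  refine Finset.sum_congr rfl fun j _ => ?_
  rw [Ecoef, Finset.sum_mul]
  refine Finset.sum_congr rfl fun S hS => ?_
  have hSc : S.card = j := (Finset.mem_powersetCard.1 hS).2
  rw [Finset.prod_mul_distrib, Finset.prod_const, hSc]
  ring

lemma coeffE (hn : 0 < n) (hζ : IsPrimitiveRoot ζ n) (r : ℕ) (hr : r < n) :
    Ecoef n ζ r = (-1)^r * bc n (r+1) := by
  set P : ℂ[X] := X * ∑ j ∈ range n, C (Ecoef n ζ j) * X^j with hP
  set Q : ℂ[X] := C 2 + ∑ j ∈ range (n+1), C ((-1)^(j+1) * bc n j) * X^j with hQ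
  have hPQ : P = Q := by
    apply Polynomial.funext
    intro t
    rw [hP, hQ]
    simp only [eval_mul, eval_X, eval_finset_sum, eval_C, eval_pow, eval_add]
    rw [← expand hn t, step5 hn hζ t, cheb_coeff n t]
    have hflip : ∑ x ∈ range (n+1), (-1:ℂ)^(x+1) * bc n x * t^x
        = -∑ j ∈ range (n+1), (-1:ℂ)^j * bc n j * t^j := by
      rw [← Finset.sum_neg_distrib]
      exact Finset.sum_congr rfl fun j _ => by ring
    rw [hflip]
    ring
  have hcoeff := congrArg (fun p : ℂ[X] => Polynomial.coeff p (r+1)) hPQ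
  simp only [hP, hQ] at hcoeff
  rw [Polynomial.coeff_X_mul] at hcoeff
  rw [Polynomial.finset_sum_coeff, Polynomial.coeff_add, Polynomial.finset_sum_coeff] at hcoeff
  simp only [Polynomial.coeff_C_mul_X_pow] at hcoeff
  rw [Finset.sum_ite_eq (range n) r (fun j => Ecoef n ζ j)] at hcoeff
  rw [Finset.sum_ite_eq (range (n+1)) (r+1) (fun j => (-1:ℂ)^(j+1) * bc n j)] at hcoeff
  rw [if_pos (Finset.mem_range.2 hr), if_pos (Finset.mem_range.2 (by omega))] at hcoeff
  rw [Polynomial.coeff_C, if_neg (Nat.succ_ne_zero r)] at hcoeff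
  rw [hcoeff]
  ring


lemma mem_msets {n r : ℕ} {m : Fin r → Fin n} :
    m ∈ msets n r ↔ (∀ i j : Fin r, i < j → m j < m i) ∧ ∀ i, 0 < (m i : ℕ) := by
  simp [msets]

lemma msets_inj {n r : ℕ} {m : Fin r → Fin n} (hm : m ∈ msets n r) :
    Function.Injective fun i => (m i : ℕ) := by
  intro i j h
  dsimp only at h
  rcases lt_trichotomy i j with hij | rfl | hij
  · have := (mem_msets.1 hm).1 i j hij
    rw [Fin.lt_def] at this
    omega
  · rfl
  · have := (mem_msets.1 hm).1 j i hij
    rw [Fin.lt_def] at this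
    omega

lemma sum_msets_eq (n r : ℕ) (f : ℕ → ℂ) :
    ∑ m ∈ msets n r, ∏ i : Fin r, f (m i : ℕ)
      = ∑ S ∈ powersetCard r (Ico 1 n), ∏ a ∈ S, f a := by
  classical
  refine Finset.sum_bij' (i := fun m _ => Finset.image (fun i => (m i : ℕ)) Finset.univ)
    (j := fun S hS => fun i : Fin r =>
      (⟨S.orderEmbOfFin (Finset.mem_powersetCard.1 hS).2 i.rev,
        (Finset.mem_Ico.1 ((Finset.mem_powersetCard.1 hS).1
          (Finset.orderEmbOfFin_mem S _ i.rev))).2⟩ : Fin n))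
    ?_ ?_ ?_ ?_ ?_
  · -- hi : image ∈ powersetCard
    intro m hm
    rw [Finset.mem_powersetCard]
    constructor
    · intro x hx
      obtain ⟨i, _, rfl⟩ := Finset.mem_image.1 hx
      exact Finset.mem_Ico.2 ⟨(mem_msets.1 hm).2 i, (m i).isLt⟩
    · rw [Finset.card_image_of_injective _ (msets_inj hm), Finset.card_univ,
        Fintype.card_fin]
  · -- hj : tup ∈ msets
    intro S hS
    rw [mem_msets]
    constructor
    · intro i j hij
      have := (S.orderEmbOfFin (Finset.mem_powersetCard.1 hS).2).strictMono
        (Fin.rev_lt_rev.2 hij)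
      exact this
    · intro i
      exact (Finset.mem_Ico.1 ((Finset.mem_powersetCard.1 hS).1
        (Finset.orderEmbOfFin_mem S _ i.rev))).1
  · -- left_inv
    intro m hm
    funext i
    have hcard : (Finset.image (fun i => (m i : ℕ)) Finset.univ).card = r := by
      rw [Finset.card_image_of_injective _ (msets_inj hm), Finset.card_univ,
        Fintype.card_fin]
    have hmono : StrictMono fun i : Fin r => (m i.rev : ℕ) := by
      intro i j hij
      exact_mod_cast (mem_msets.1 hm).1 j.rev i.rev (Fin.rev_lt_rev.2 hij)
    have hfs : ∀ i : Fin r, (m i.rev : ℕ) ∈ Finset.image (fun i => (m i : ℕ)) Finset.univ :=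
      fun i => Finset.mem_image_of_mem _ (Finset.mem_univ _)
    have huniq := Finset.orderEmbOfFin_unique hcard hfs hmono
    apply Fin.ext
    show ((Finset.image (fun i => (m i : ℕ)) Finset.univ).orderEmbOfFin _ i.rev : ℕ) = (m i : ℕ)
    rw [← congrFun huniq i.rev, Fin.rev_rev]
  · -- right_inv
    intro S hS
    apply Finset.coe_injective
    rw [Finset.coe_image, Finset.coe_univ, Set.image_univ]
    show Set.range ((S.orderEmbOfFin (Finset.mem_powersetCard.1 hS).2) ∘ Fin.rev) = (S : Set ℕ)
    rw [Set.range_comp, Fin.rev_involutive.surjective.range_eq, Set.image_univ,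
      Finset.range_orderEmbOfFin]
  · -- values
    intro m hm
    exact (Finset.prod_image fun i _ j _ h => msets_inj hm h).symm


lemma tendsto_cast_div (c : ℂ) : Tendsto (fun n : ℕ => c / n) atTop (nhds 0) := by
  rw [tendsto_zero_iff_norm_tendsto_zero]
  have h := tendsto_const_div_atTop_nhds_zero_nat ‖c‖
  refine h.congr fun n => ?_
  rw [norm_div, Complex.norm_natCast]

lemma choose_lim (a k : ℕ) :
    Tendsto (fun n : ℕ => (((n + a).choose k : ℕ) : ℂ) / (n : ℂ)^k) atTop
      (nhds (1 / (k.factorial : ℂ))) := by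
  have hfact : ∀ n : ℕ, (((n + a).choose k : ℕ) : ℂ)
      = (∏ i ∈ range k, (((n + a - i : ℕ)) : ℂ)) / (k.factorial : ℂ) := by
    intro n
    have h1 : (k.factorial * (n + a).choose k : ℕ) = ∏ i ∈ range k, (n + a - i) := by
      rw [← Nat.descFactorial_eq_factorial_mul_choose, Nat.descFactorial_eq_prod_range]
    have h2 := congrArg (Nat.cast : ℕ → ℂ) h1
    push_cast at h2
    rw [eq_div_iff (by exact_mod_cast k.factorial_ne_zero)]
    rw [mul_comm]
    rw [← h2]
  have heq : ∀ n : ℕ, (((n + a).choose k : ℕ) : ℂ) / (n : ℂ)^k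
      = (∏ i ∈ range k, ((((n + a - i : ℕ)) : ℂ) / (n : ℂ))) * (1 / (k.factorial : ℂ)) := by
    intro n
    rw [hfact n, Finset.prod_div_distrib, Finset.prod_const, Finset.card_range]
    ring
  rw [tendsto_congr heq]
  have hprod : Tendsto (fun n : ℕ => ∏ i ∈ range k, ((((n + a - i : ℕ)) : ℂ) / (n : ℂ)))
      atTop (nhds (∏ _i ∈ range k, (1:ℂ))) := by
    apply tendsto_finset_prod
    intro i _
    have hf : Tendsto (fun n : ℕ => 1 + ((a : ℂ) - i) / n) atTop (nhds 1) := by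
      have := (tendsto_const_nhds (x := (1:ℂ)) (f := atTop (α := ℕ))).add
        (tendsto_cast_div ((a : ℂ) - i))
      simpa using this
    apply hf.congr'
    filter_upwards [eventually_ge_atTop (i + 1)] with n hn
    have hni : i ≤ n + a := by omega
    have hcast : (((n + a - i : ℕ)) : ℂ) = (n : ℂ) + a - i := by
      push_cast [hni]
      ring
    rw [hcast]
    have hn0 : (n : ℂ) ≠ 0 := Nat.cast_ne_zero.2 (by omega)
    field_simp
    ring
  have := hprod.mul (tendsto_const_nhds (x := 1 / (k.factorial : ℂ)))
  simpa using this

lemma one_sub_exp : Tendsto (fun n : ℕ => (1 - Complex.exp (2 * (Real.pi:ℂ) * I / n)) * n)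
    atTop (nhds (-(2 * (Real.pi:ℂ) * I))) := by
  have hslope : Tendsto (fun z : ℂ => (Complex.exp z - 1) / z) (nhdsWithin 0 {(0:ℂ)}ᶜ)
      (nhds 1) := by
    have h := Complex.hasDerivAt_exp 0
    rw [hasDerivAt_iff_tendsto_slope] at h
    rw [Complex.exp_zero] at h
    refine h.congr fun z => ?_
    rw [slope_def_field, Complex.exp_zero, sub_zero]
  have hz : Tendsto (fun n : ℕ => 2 * (Real.pi:ℂ) * I / n) atTop
      (nhdsWithin 0 {(0:ℂ)}ᶜ) := by
    apply tendsto_nhdsWithin_of_tendsto_nhds_of_eventually_within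
    · exact tendsto_cast_div _
    · filter_upwards [eventually_ge_atTop 1] with n hn
      have hn0 : (n:ℂ) ≠ 0 := Nat.cast_ne_zero.2 (by omega)
      exact div_ne_zero Complex.two_pi_I_ne_zero hn0
  have hcomp := ((hslope.comp hz).mul_const (2 * (Real.pi:ℂ) * I)).neg
  rw [one_mul] at hcomp
  apply hcomp.congr'
  filter_upwards [eventually_ge_atTop 1] with n hn
  have hn0 : (n:ℂ) ≠ 0 := Nat.cast_ne_zero.2 (by omega)
  have hz0 : 2 * (Real.pi:ℂ) * I / n ≠ 0 := div_ne_zero Complex.two_pi_I_ne_zero hn0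
  have h2 : (2 * (Real.pi:ℂ) * I / n) * n = 2 * (Real.pi:ℂ) * I :=
    div_mul_cancel₀ _ hn0
  show -((Complex.exp (2 * (Real.pi:ℂ) * I / n) - 1) / (2 * (Real.pi:ℂ) * I / n)
      * (2 * (Real.pi:ℂ) * I)) = (1 - Complex.exp (2 * (Real.pi:ℂ) * I / n)) * n
  generalize hzz : 2 * (Real.pi:ℂ) * I / (n:ℂ) = zz at hz0 h2 ⊢
  rw [← h2, ← mul_assoc, div_mul_cancel₀ _ hz0]
  ring


lemma z_formula (r n : ℕ) (hn : 2 ≤ n) (hrn : r < n) (ζ : ℂ) (hζ : IsPrimitiveRoot ζ n) :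
    z n (fun _ : Fin r => 2) ζ = (1 - ζ)^(2*r) * ((-1)^r * bc n (r+1)) / (n:ℂ)^2 := by
  have hn0 : 0 < n := by omega
  have hζ1 : ζ ≠ 1 := hζ.ne_one (by omega)
  have h1ζ : (1:ℂ) - ζ ≠ 0 := sub_ne_zero.mpr (Ne.symm hζ1)
  have hpow : ∀ a : ℕ, 0 < a → a < n → (1:ℂ) - ζ^a ≠ 0 := fun a ha1 ha2 =>
    sub_ne_zero.mpr (Ne.symm (hζ.pow_ne_one_of_pos_of_lt ha1.ne' ha2))
  have hNc : ((n:ℂ))^2 ≠ 0 := pow_ne_zero 2 (Nat.cast_ne_zero.2 (by omega))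
  have hsummand : ∀ m ∈ msets n r,
      (∏ i : Fin r, ζ ^ ((2 - 1) * (m i : ℕ)) / ((1 - ζ ^ (m i : ℕ)) / (1 - ζ)) ^ 2)
        = (1-ζ)^(2*r) * ∏ i : Fin r, (ζ^(m i:ℕ)/(1-ζ^(m i:ℕ))^2) := by
    intro m hm
    have hfac : ∀ i : Fin r, ζ ^ ((2 - 1) * (m i : ℕ)) / ((1 - ζ ^ (m i : ℕ)) / (1 - ζ)) ^ 2
        = (1-ζ)^2 * (ζ^(m i:ℕ)/(1-ζ^(m i:ℕ))^2) := by
      intro i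
      have h2 := hpow (m i) ((mem_msets.1 hm).2 i) (m i).isLt
      rw [show (2-1) * (m i : ℕ) = (m i : ℕ) by omega]
      field_simp
    rw [Finset.prod_congr rfl (fun i _ => hfac i), Finset.prod_mul_distrib,
      Finset.prod_const, Finset.card_univ, Fintype.card_fin, ← pow_mul]
  have hz : z n (fun _ : Fin r => 2) ζ
      = (1-ζ)^(2*r) * ∑ m ∈ msets n r, ∏ i : Fin r, (ζ^(m i:ℕ)/(1-ζ^(m i:ℕ))^2) := by
    rw [z, Finset.sum_congr rfl hsummand, ← Finset.mul_sum]
  have hE : Ecoef n ζ r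
      = (n:ℂ)^2 * ∑ S ∈ powersetCard r (Ico 1 n), ∏ a ∈ S, (ζ^a/(1-ζ^a)^2) := by
    rw [Ecoef, Finset.mul_sum]
    refine Finset.sum_congr rfl fun S hS => ?_
    have hSsub := (Finset.mem_powersetCard.1 hS).1
    have hQ0 : (∏ a ∈ S, (1-ζ^a)^2) ≠ 0 := by
      rw [Finset.prod_ne_zero_iff]
      intro a ha
      have := Finset.mem_Ico.1 (hSsub ha)
      exact pow_ne_zero 2 (hpow a this.1 this.2)
    have key : (∏ m ∈ (Ico 1 n) \ S, (1-ζ^m)^2) * ∏ m ∈ S, (1-ζ^m)^2 = ((n:ℂ))^2 := by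
      rw [Finset.prod_sdiff hSsub, Finset.prod_pow, prod_units hn0 hζ]
    have hsplit : (n:ℂ)^2 * ((∏ a ∈ S, ζ^a) / (∏ a ∈ S, (1-ζ^a)^2))
        = (∏ a ∈ S, ζ^a) * ((n:ℂ)^2 / (∏ a ∈ S, (1-ζ^a)^2)) := by ring
    rw [Finset.prod_div_distrib, hsplit, ← (eq_div_iff hQ0).mpr key]
  rw [hz, sum_msets_eq n r (fun a => ζ^a/(1-ζ^a)^2)]
  rw [coeffE hn0 hζ r hrn] at hE
  have : (∑ S ∈ powersetCard r (Ico 1 n), ∏ a ∈ S, (ζ^a/(1-ζ^a)^2))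
      = (-1)^r * bc n (r+1) / (n:ℂ)^2 := by
    rw [eq_div_iff hNc]
    linear_combination -hE
  rw [this]
  ring

theorem xi_twos' (r : ℕ) (hr : 1 ≤ r) :
    Filter.Tendsto
      (fun n : ℕ => z n (fun _ : Fin r => 2)
        (Complex.exp (2 * (Real.pi : ℂ) * Complex.I / (n : ℂ))))
      Filter.atTop
      (nhds ((2 ^ (2 * r) * (Real.pi : ℂ) ^ (2 * r)) /
        (((r : ℂ) + 1) * (Nat.factorial (2 * r + 1) : ℂ)))) := by
  have h1 : Tendsto (fun n : ℕ => ((1 - Complex.exp (2*(Real.pi:ℂ)*I/n)) * n)^(2*r))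
      atTop (nhds ((-(2*(Real.pi:ℂ)*I))^(2*r))) := one_sub_exp.pow (2*r)
  have hA := choose_lim (r+1) (2*r+2)
  simp only [show ∀ n:ℕ, n + (r+1) = n+r+1 from fun n => by omega] at hA
  have hB0 := (choose_lim r (2*r+1)).mul (tendsto_cast_div 1)
  rw [mul_zero] at hB0
  have hB : Tendsto (fun n : ℕ => (((n + r).choose (2*r+1) : ℕ) : ℂ) / (n:ℂ)^(2*r+2))
      atTop (nhds 0) := by
    refine hB0.congr fun n => ?_
    rw [div_mul_div_comm, mul_one, ← pow_succ]
  have h2 : Tendsto (fun n : ℕ => (-1:ℂ)^r * bc n (r+1) / (n:ℂ)^(2*r+2))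
      atTop (nhds ((-1:ℂ)^r * (2 * (1 / ((2*r+2).factorial : ℂ)) - 0))) := by
    refine (((hA.const_mul 2).sub hB).const_mul ((-1:ℂ)^r)).congr fun n => ?_
    rw [bc_def n r]
    rw [mul_div_assoc, mul_comm ((-1:ℂ)^r), ← mul_div_assoc]
    rw [sub_div, mul_div_assoc]
    ring
  have hmul := h1.mul h2
  have heq : (fun n : ℕ => ((1 - Complex.exp (2*(Real.pi:ℂ)*I/n)) * n)^(2*r)
        * ((-1:ℂ)^r * bc n (r+1) / (n:ℂ)^(2*r+2)))
      =ᶠ[atTop] (fun n : ℕ => z n (fun _ : Fin r => 2)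
        (Complex.exp (2 * (Real.pi : ℂ) * Complex.I / (n : ℂ)))) := by
    filter_upwards [eventually_ge_atTop (r+2)] with n hn
    have hζ := Complex.isPrimitiveRoot_exp n (by omega)
    rw [z_formula r n (by omega) (by omega) _ hζ]
    have hn0 : (n:ℂ) ≠ 0 := Nat.cast_ne_zero.2 (by omega)
    rw [mul_pow]
    rw [show (2*r+2) = 2*r + 2 from rfl, pow_add]
    field_simp
  have hfinal := hmul.congr' heq
  convert hfinal using 2
  have hI : ((2*(Real.pi:ℂ)*I))^(2*r) = 2^(2*r) * (Real.pi:ℂ)^(2*r) * ((-1:ℂ)^r) := by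
    rw [mul_pow, mul_pow, pow_mul I 2 r, I_sq]
  have hnegneg : (-1:ℂ)^r * (-1)^r = 1 := by
    rw [← pow_add]
    exact Even.neg_one_pow ⟨r, by ring⟩
  have hfacn : (2*r+2).factorial = (2*r+2) * (2*r+1).factorial := Nat.factorial_succ _
  have hfac : ((2*r+2).factorial : ℂ) = 2*((r:ℂ)+1) * ((2*r+1).factorial : ℂ) := by
    rw [hfacn]
    push_cast
    ring
  rw [Even.neg_pow (even_two_mul r), hI]
  have hf0 : ((2*r+1).factorial : ℂ) ≠ 0 := Nat.cast_ne_zero.2 (Nat.factorial_ne_zero _)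
  have hr0 : ((r:ℂ)+1) ≠ 0 := by
    exact_mod_cast (Nat.cast_ne_zero (R := ℂ)).2 (Nat.succ_ne_zero r)
  rw [sub_zero]
  have step : 2^(2*r)*(Real.pi:ℂ)^(2*r)*((-1:ℂ)^r) * ((-1:ℂ)^r * (2 * (1/(((2*r+2).factorial) : ℂ))))
      = 2^(2*r)*(Real.pi:ℂ)^(2*r) * (2/(((2*r+2).factorial) :ℂ)) := by
    calc 2^(2*r)*(Real.pi:ℂ)^(2*r)*((-1:ℂ)^r) * ((-1:ℂ)^r * (2 * (1/(((2*r+2).factorial) : ℂ))))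
        = 2^(2*r)*(Real.pi:ℂ)^(2*r) * (2/(((2*r+2).factorial) :ℂ)) * ((-1:ℂ)^r * (-1)^r) := by
          ring
      _ = _ := by rw [hnegneg, mul_one]
  rw [step, hfac]
  field_simp


end XiTwosAux

/-- `ξ({2}^r) = lim_{n→∞} z_n({2}^r; e^{2πi/n})
  = 2^{2r} π^{2r} / ((r+1)(2r+1)!)`. -/
theorem xi_twos (r : ℕ) (hr : 1 ≤ r) :
    Filter.Tendsto
      (fun n : ℕ => z n (fun _ : Fin r => 2)
        (Complex.exp (2 * (Real.pi : ℂ) * Complex.I / (n : ℂ))))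
      Filter.atTop
      (nhds ((2 ^ (2 * r) * (Real.pi : ℂ) ^ (2 * r)) /
        (((r : ℂ) + 1) * (Nat.factorial (2 * r + 1) : ℂ)))) := by
  exact XiTwosAux.xi_twos' r hr
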